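/- Let I : (0,∞) → (0,∞) be a positive function, f* : (0,∞) → [0,∞) a decreasing function, μ_D > 0, 0 < q ≤ 2, and m : [0,∞) → [0, μ_D] a decreasing absolutely continuous distribution function. Suppose that for a.e. t > 0, 1 ≤ (I(m(t)))^{-2} (∫_0^{m(t)} f*(σ)dσ)(−m'(t)), and that −(d/dt)∫_{|u|>t}|∇u|^q dμ ≤ (∫_0^{m(t)} f*(s)ds)^{q/2} (−m'(t))^{1−q/2} for a.e. t. Then ∫_D |∇u|^q dμ ≤ ∫_0^{μ_D} I(s)^{−q} (∫_0^s f*(σ)dσ)^q ds. -/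
import Mathlib


open Real MeasureTheory Set intervalIntegral

private lemma talenti_key_alg (A p c q : ℝ) (hA : 0 < A) (hp : 0 < p) (hc : 0 < c) (hq : 0 < q)
    (h1 : 1 ≤ (c ^ 2)⁻¹ * A * p) :
    A ^ (q / 2) * p ^ (1 - q / 2) ≤ p * (c ^ (-q) * A ^ q) := by
  have hr : (1:ℝ) ≤ ((c ^ 2)⁻¹ * A * p) ^ (q / 2) := by
    calc (1:ℝ) = (1:ℝ) ^ (q / 2) := (Real.one_rpow _).symm
    _ ≤ ((c ^ 2)⁻¹ * A * p) ^ (q / 2) :=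
        Real.rpow_le_rpow zero_le_one h1 (by positivity)
  have e0 : ((c ^ 2)⁻¹ : ℝ) ^ (q / 2) = c ^ (-q) := by
    have h2 : ((c:ℝ) ^ 2)⁻¹ = c ^ (-2 : ℝ) := by
      rw [Real.rpow_neg hc.le, show (2:ℝ) = ((2:ℕ):ℝ) by norm_num, Real.rpow_natCast]
    rw [h2, ← Real.rpow_mul hc.le, show (-2:ℝ) * (q / 2) = -q by ring]
  have eA : A ^ (q / 2) * A ^ (q / 2) = A ^ q := by
    rw [← Real.rpow_add hA, show q / 2 + q / 2 = q by ring]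
  have ep : p ^ (1 - q / 2) * p ^ (q / 2) = p := by
    rw [← Real.rpow_add hp, show 1 - q / 2 + q / 2 = 1 by ring, Real.rpow_one]
  calc A ^ (q / 2) * p ^ (1 - q / 2)
      = A ^ (q / 2) * p ^ (1 - q / 2) * 1 := by ring
    _ ≤ A ^ (q / 2) * p ^ (1 - q / 2) * ((c ^ 2)⁻¹ * A * p) ^ (q / 2) :=
        mul_le_mul_of_nonneg_left hr (by positivity)
    _ = A ^ (q / 2) * p ^ (1 - q / 2) * (((c ^ 2)⁻¹) ^ (q / 2) * A ^ (q / 2) * p ^ (q / 2)) := by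
        rw [Real.mul_rpow (by positivity) hp.le, Real.mul_rpow (by positivity) hA.le]
    _ = (A ^ (q / 2) * A ^ (q / 2)) * (p ^ (1 - q / 2) * p ^ (q / 2)) * ((c ^ 2)⁻¹) ^ (q / 2) := by
        ring
    _ = p * (c ^ (-q) * A ^ q) := by rw [eA, ep, e0]; ring

/-- Abstract real-variable step of Talenti's gradient comparison: if `m` is a decreasing
absolutely continuous distribution function with values in `[0, μ_D]` satisfying a.e. the
isoperimetric differential inequality `1 ≤ I(m(t))⁻² (∫_0^{m(t)} f*)(−m'(t))`, and if the
gradient distribution `G(t) = ∫_{|u|>t} |∇u|^q dμ` satisfies a.e.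
`−G'(t) ≤ (∫_0^{m(t)} f*)^{q/2} (−m'(t))^{1−q/2}`, then (with the layer-cake identity
`∫_D |∇u|^q dμ = ∫_0^∞ (−G'(t)) dt`) one has
`∫_D |∇u|^q dμ ≤ ∫_0^{μ_D} I(s)^{−q} (∫_0^s f*)^q ds`. -/
theorem talenti_gradient_comparison_step
    (I f m m' G G' : ℝ → ℝ) (μD q E : ℝ)
    (hμD : 0 < μD) (hq : 0 < q) (hq2 : q ≤ 2)
    (hI : ∀ s ∈ Ioo 0 μD, 0 < I s) (hImeas : Measurable I)
    (hf : AntitoneOn f (Ioi 0)) (hf0 : ∀ s, 0 ≤ f s)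
    (hfint : IntegrableOn f (Ioc 0 μD))
    (hm : AntitoneOn m (Ici 0)) (hmrange : ∀ t ≥ 0, m t ∈ Icc 0 μD)
    (hm' : ∀ᵐ t ∂volume.restrict (Ioi 0), HasDerivAt m (m' t) t)
    (hG' : ∀ᵐ t ∂volume.restrict (Ioi 0), HasDerivAt G (G' t) t)
    (hdiff : ∀ᵐ t ∂volume.restrict (Ioi 0),
      1 ≤ ((I (m t)) ^ 2)⁻¹ * (∫ σ in (0:ℝ)..m t, f σ) * (-m' t))
    (hgrad : ∀ᵐ t ∂volume.restrict (Ioi 0),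
      -G' t ≤ (∫ σ in (0:ℝ)..m t, f σ) ^ (q / 2) * (-m' t) ^ (1 - q / 2))
    (hE : E = ∫ t in Ioi (0:ℝ), -G' t)
    (hconc : IntegrableOn (fun s => I s ^ (-q) * (∫ σ in (0:ℝ)..s, f σ) ^ q) (Ioc 0 μD)) :
    E ≤ ∫ s in (0:ℝ)..μD, I s ^ (-q) * (∫ σ in (0:ℝ)..s, f σ) ^ q := by
  have hFnn : ∀ s : ℝ, 0 ≤ s → 0 ≤ ∫ σ in (0:ℝ)..s, f σ := fun s hs =>
    intervalIntegral.integral_nonneg hs fun u _ => hf0 u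
  -- the set where `m = μD` with nonzero derivative is at most a single point
  have hB0 : volume {t : ℝ | 0 < t ∧ m t = μD ∧ HasDerivAt m (m' t) t ∧ m' t ≠ 0} = 0 := by
    set S : Set ℝ := {t | 0 < t ∧ m t = μD} with hS
    refine measure_mono_null (fun t ht => ?_) (measure_singleton (sSup S))
    obtain ⟨ht0, htm, htd, htne⟩ := ht
    have hub : t ∈ upperBounds S := by
      intro t' ht'
      by_contra hlt
      push_neg at hlt
      have hconst : ∀ s ∈ Ioo (0:ℝ) t', m s = μD := by
        intro s hs
        refine le_antisymm (hmrange s hs.1.le).2 ?_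
        rw [← ht'.2]
        exact hm (mem_Ici.mpr hs.1.le) (mem_Ici.mpr ht'.1.le) hs.2.le
      have hev : m =ᶠ[nhds t] fun _ => μD :=
        Filter.eventuallyEq_of_mem (Ioo_mem_nhds ht0 hlt) hconst
      have h0 : HasDerivAt m 0 t := (hasDerivAt_const t μD).congr_of_eventuallyEq hev
      exact htne (htd.unique h0)
    have hgt : IsGreatest S t := ⟨⟨ht0, htm⟩, hub⟩
    simpa [mem_singleton_iff] using hgt.csSup_eq.symm
  -- the good set `T`
  set T : Set ℝ := ({t | 0 < t ∧ m t ∈ Ioo 0 μD} ∩ {t | DifferentiableAt ℝ m t})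
      ∩ {t | deriv m t ≠ 0} with hTdef
  have hTsub : T ⊆ Ioi 0 := fun t ht => ht.1.1.1
  have hTmeas : MeasurableSet T := by
    have h1 : MeasurableSet {t : ℝ | 0 < t ∧ m t ∈ Ioo 0 μD} := by
      apply Set.OrdConnected.measurableSet
      refine ⟨fun x hx z hz y hy => ?_⟩
      have hy0 : (0:ℝ) < y := lt_of_lt_of_le hx.1 hy.1
      refine ⟨hy0, lt_of_lt_of_le hz.2.1 (hm (mem_Ici.mpr hy0.le)
        (mem_Ici.mpr (lt_of_lt_of_le hy0 hy.2).le) hy.2), ?_⟩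
      exact lt_of_le_of_lt (hm (mem_Ici.mpr hx.1.le) (mem_Ici.mpr hy0.le) hy.1) hx.2.2
    have h2 : MeasurableSet {t : ℝ | DifferentiableAt ℝ m t} :=
      measurableSet_of_differentiableAt ℝ m
    have h3 : MeasurableSet {t : ℝ | deriv m t ≠ 0} :=
      (measurable_deriv m) (measurableSet_singleton (0:ℝ)).compl
    exact (h1.inter h2).inter h3
  have hTinj : InjOn m T := by
    have key : ∀ a b : ℝ, a ∈ T → b ∈ T → a < b → m a = m b → False := by
      intro a b ha hb hlt hab
      have ha0 : (0:ℝ) < a := ha.1.1.1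
      have hconst : ∀ y ∈ Icc a b, m y = m a := by
        intro y hy
        have hy0 : (0:ℝ) ≤ y := le_trans ha0.le hy.1
        refine le_antisymm (hm (mem_Ici.mpr ha0.le) (mem_Ici.mpr hy0) hy.1) ?_
        rw [hab]
        exact hm (mem_Ici.mpr hy0) (mem_Ici.mpr (le_trans hy0 hy.2)) hy.2
      have hd1 : HasDerivWithinAt m (deriv m a) (Icc a b) a :=
        ha.1.2.hasDerivAt.hasDerivWithinAt
      have hd2 : HasDerivWithinAt m 0 (Icc a b) a :=
        (hasDerivWithinAt_const a (Icc a b) (m a)).congr hconst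
          (hconst a (left_mem_Icc.mpr hlt.le))
      have hud : UniqueDiffWithinAt ℝ (Icc a b) a :=
        (uniqueDiffOn_Icc hlt) a (left_mem_Icc.mpr hlt.le)
      have e1 : derivWithin m (Icc a b) a = deriv m a := hd1.derivWithin hud
      have e2 : derivWithin m (Icc a b) a = 0 := hd2.derivWithin hud
      exact ha.2 (by rw [← e1, e2])
    intro a ha b hb hab
    by_contra hne
    rcases lt_or_gt_of_ne hne with h | h
    · exact key a b ha hb h hab
    · exact key b a hb ha h hab.symm
  have hTmaps : m '' T ⊆ Ioo 0 μD := by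
    rintro _ ⟨t, ht, rfl⟩
    exact ht.1.1.2
  have hdT : ∀ x ∈ T, HasDerivWithinAt m (deriv m x) T x := fun x hx =>
    hx.1.2.hasDerivAt.hasDerivWithinAt
  -- main a.e. pointwise bound
  have hae : ∀ᵐ t ∂volume.restrict (Ioi (0:ℝ)),
      t ∈ T ∧ -G' t ≤ |deriv m t| * (I (m t) ^ (-q) * (∫ σ in (0:ℝ)..m t, f σ) ^ q) := by
    have hBae : ∀ᵐ t ∂volume.restrict (Ioi (0:ℝ)),
        t ∉ {t : ℝ | 0 < t ∧ m t = μD ∧ HasDerivAt m (m' t) t ∧ m' t ≠ 0} :=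
      ae_restrict_of_ae (measure_eq_zero_iff_ae_notMem.mp hB0)
    filter_upwards [ae_restrict_mem measurableSet_Ioi, hm', hdiff, hgrad, hBae]
      with t ht hd hdi hgr hnB
    have ht0 : (0:ℝ) < t := ht
    have hm0 : 0 ≤ m t := (hmrange t ht0.le).1
    have hmD : m t ≤ μD := (hmrange t ht0.le).2
    have hAnn : 0 ≤ ∫ σ in (0:ℝ)..m t, f σ := hFnn _ hm0
    have hIsq : (0:ℝ) ≤ ((I (m t)) ^ 2)⁻¹ := by positivity
    have hp : 0 < -m' t := by
      by_contra hple
      push_neg at hple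
      nlinarith [mul_nonneg hIsq hAnn]
    have hApos : 0 < ∫ σ in (0:ℝ)..m t, f σ := by
      rcases hAnn.lt_or_eq with h | h
      · exact h
      · exfalso
        rw [← h, mul_zero, zero_mul] at hdi
        linarith
    have hmtpos : 0 < m t := by
      rcases hm0.lt_or_eq with h | h
      · exact h
      · exfalso
        rw [← h, intervalIntegral.integral_same] at hApos
        exact lt_irrefl _ hApos
    have hm'neg : m' t < 0 := neg_pos.mp hp
    have hmtlt : m t < μD := by
      rcases hmD.lt_or_eq with h | h
      · exact h
      · exact absurd ⟨ht0, h, hd, hm'neg.ne⟩ hnB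
    have hIpos : 0 < I (m t) := hI (m t) ⟨hmtpos, hmtlt⟩
    have hderiv_eq : deriv m t = m' t := hd.deriv
    refine ⟨⟨⟨⟨ht0, hmtpos, hmtlt⟩, hd.differentiableAt⟩, by
      rw [mem_setOf_eq, hderiv_eq]; exact hm'neg.ne⟩, ?_⟩
    calc -G' t ≤ (∫ σ in (0:ℝ)..m t, f σ) ^ (q / 2) * (-m' t) ^ (1 - q / 2) := hgr
      _ ≤ (-m' t) * (I (m t) ^ (-q) * (∫ σ in (0:ℝ)..m t, f σ) ^ q) :=
          talenti_key_alg _ _ _ _ hApos hp hIpos hq hdi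
      _ = |deriv m t| * (I (m t) ^ (-q) * (∫ σ in (0:ℝ)..m t, f σ) ^ q) := by
          rw [hderiv_eq, abs_of_neg hm'neg]
  -- change of variables on `T`
  have hCoV : (∫ s in m '' T, I s ^ (-q) * (∫ σ in (0:ℝ)..s, f σ) ^ q)
      = ∫ t in T, |deriv m t| • (I (m t) ^ (-q) * (∫ σ in (0:ℝ)..m t, f σ) ^ q) :=
    integral_image_eq_integral_abs_deriv_smul hTmeas hdT hTinj _
  have himg_int : IntegrableOn (fun s => I s ^ (-q) * (∫ σ in (0:ℝ)..s, f σ) ^ q) (m '' T) :=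
    hconc.mono_set (hTmaps.trans Ioo_subset_Ioc_self)
  have hT_int : IntegrableOn
      (fun t => |deriv m t| * (I (m t) ^ (-q) * (∫ σ in (0:ℝ)..m t, f σ) ^ q)) T := by
    have := (integrableOn_image_iff_integrableOn_abs_deriv_smul hTmeas hdT hTinj
      (fun s => I s ^ (-q) * (∫ σ in (0:ℝ)..s, f σ) ^ q)).mp himg_int
    simpa [smul_eq_mul] using this
  -- the dominating function
  have hh_int : Integrable
      (T.indicator fun t => |deriv m t| * (I (m t) ^ (-q) * (∫ σ in (0:ℝ)..m t, f σ) ^ q))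
      (volume.restrict (Ioi 0)) := by
    refine IntegrableOn.integrable_indicator ?_ hTmeas
    rw [IntegrableOn, Measure.restrict_restrict hTmeas, inter_eq_self_of_subset_left hTsub]
    exact hT_int
  have hh_nonneg : ∀ t, 0 ≤ (T.indicator fun t =>
      |deriv m t| * (I (m t) ^ (-q) * (∫ σ in (0:ℝ)..m t, f σ) ^ q)) t := by
    intro t
    apply Set.indicator_nonneg
    intro x hx
    have h1 : 0 < I (m x) := hI _ hx.1.1.2
    have h2 : 0 ≤ ∫ σ in (0:ℝ)..m x, f σ := hFnn _ hx.1.1.2.1.le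
    positivity
  have hEle : E ≤ ∫ t in Ioi (0:ℝ), (T.indicator fun t =>
      |deriv m t| * (I (m t) ^ (-q) * (∫ σ in (0:ℝ)..m t, f σ) ^ q)) t := by
    rw [hE]
    have hle : (fun t => -G' t) ≤ᵐ[volume.restrict (Ioi (0:ℝ))]
        T.indicator fun t => |deriv m t| * (I (m t) ^ (-q) * (∫ σ in (0:ℝ)..m t, f σ) ^ q) := by
      filter_upwards [hae] with t ht
      rw [Set.indicator_of_mem ht.1]
      exact ht.2
    by_cases hint : Integrable (fun t => -G' t) (volume.restrict (Ioi (0:ℝ)))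
    · exact integral_mono_ae hint hh_int hle
    · rw [integral_undef hint]
      exact integral_nonneg hh_nonneg
  have hind : (∫ t in Ioi (0:ℝ), (T.indicator fun t =>
      |deriv m t| * (I (m t) ^ (-q) * (∫ σ in (0:ℝ)..m t, f σ) ^ q)) t)
      = ∫ t in T, |deriv m t| * (I (m t) ^ (-q) * (∫ σ in (0:ℝ)..m t, f σ) ^ q) := by
    rw [setIntegral_indicator hTmeas, inter_eq_self_of_subset_right hTsub]
  have hmono : (∫ s in m '' T, I s ^ (-q) * (∫ σ in (0:ℝ)..s, f σ) ^ q)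
      ≤ ∫ s in Ioc 0 μD, I s ^ (-q) * (∫ σ in (0:ℝ)..s, f σ) ^ q := by
    have hsing : ∀ᵐ s ∂volume.restrict (Ioc (0:ℝ) μD), s ≠ μD := by
      refine ae_restrict_of_ae ?_
      have h0 : volume ({μD} : Set ℝ) = 0 := measure_singleton _
      filter_upwards [measure_eq_zero_iff_ae_notMem.mp h0] with s hs
      simpa [mem_singleton_iff] using hs
    have hgnn : 0 ≤ᵐ[volume.restrict (Ioc (0:ℝ) μD)]
        fun s => I s ^ (-q) * (∫ σ in (0:ℝ)..s, f σ) ^ q := by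
      filter_upwards [ae_restrict_mem measurableSet_Ioc, hsing] with s hs hne
      have hsIoo : s ∈ Ioo (0:ℝ) μD := ⟨hs.1, lt_of_le_of_ne hs.2 hne⟩
      have h1 : 0 < I s := hI _ hsIoo
      have h2 : 0 ≤ ∫ σ in (0:ℝ)..s, f σ := hFnn _ hsIoo.1.le
      positivity
    exact setIntegral_mono_set hconc hgnn
      (HasSubset.Subset.eventuallyLE (hTmaps.trans Ioo_subset_Ioc_self))
  calc E ≤ ∫ t in Ioi (0:ℝ), (T.indicator fun t =>
        |deriv m t| * (I (m t) ^ (-q) * (∫ σ in (0:ℝ)..m t, f σ) ^ q)) t := hEle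
    _ = ∫ t in T, |deriv m t| * (I (m t) ^ (-q) * (∫ σ in (0:ℝ)..m t, f σ) ^ q) := hind
    _ = ∫ s in m '' T, I s ^ (-q) * (∫ σ in (0:ℝ)..s, f σ) ^ q := by
        rw [hCoV]; simp [smul_eq_mul]
    _ ≤ ∫ s in Ioc 0 μD, I s ^ (-q) * (∫ σ in (0:ℝ)..s, f σ) ^ q := hmono
    _ = ∫ s in (0:ℝ)..μD, I s ^ (-q) * (∫ σ in (0:ℝ)..s, f σ) ^ q :=
        (intervalIntegral.integral_of_le hμD.le).symm
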